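/- arXiv:1001.2734 — 2 statements merged into one kernel-verified Lean document; each statement's English description precedes it below -/
import Mathlib

section
/- Let L be a finite set of at least two non-vertical lines in ℝ², pairwise non-parallel (so any two lines of L intersect in exactly one point and all slopes are distinct). Then there exist two lines ℓ, ℓ' ∈ L that are adjacent in the ordering of L by slope (i.e., no line of L has slope strictly between the slopes of ℓ and ℓ') such that the x-coordinate of the intersection point of ℓ and ℓ' is minimal among the x-coordinates of all pairwise intersection points of lines in L. -/
noncomputable def interX (l l' : ℝ × ℝ) : ℝ := (l'.2 - l.2) / (l.1 - l'.1)

lemma interX_comm (a b : ℝ × ℝ) : interX a b = interX b a := by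
  simp only [interX]
  rw [← neg_sub a.2 b.2, ← neg_sub b.1 a.1, neg_div_neg_eq]

lemma interX_shift (a c : ℝ × ℝ) (x : ℝ) (h : a.1 ≠ c.1) :
    interX a c = x - (c.1 * x + c.2 - (a.1 * x + a.2)) / (c.1 - a.1) := by
  have hne : c.1 - a.1 ≠ 0 := sub_ne_zero.mpr (Ne.symm h)
  have hne' : a.1 - c.1 ≠ 0 := sub_ne_zero.mpr h
  unfold interX
  field_simp
  ring

lemma between_eq (lo hi c : ℝ × ℝ) (m : ℝ) (hm : interX lo hi = m)
    (h1 : lo.1 < c.1) (h2 : c.1 < hi.1)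
    (hmin1 : m ≤ interX lo c) (hmin2 : m ≤ interX c hi) :
    interX lo c = m := by
  have hlh : lo.1 - hi.1 ≠ 0 := sub_ne_zero.mpr (by linarith)
  -- concurrency value
  have heq : lo.1 * m + lo.2 = hi.1 * m + hi.2 := by
    have : hi.2 - lo.2 = m * (lo.1 - hi.1) := by
      rw [← hm]; unfold interX; field_simp
    linear_combination -this
  set d : ℝ := c.1 * m + c.2 - (lo.1 * m + lo.2) with hd
  have e1 : interX lo c = m - d / (c.1 - lo.1) :=
    interX_shift lo c m (by linarith)
  have e2 : interX c hi = m + d / (hi.1 - c.1) := by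
    have := interX_shift c hi m (by linarith)
    rw [this]
    have hnum : hi.1 * m + hi.2 - (c.1 * m + c.2) = -d := by
      rw [hd, ← heq]; ring
    rw [hnum, neg_div]
    ring
  have hd1 : d ≤ 0 := by
    by_contra h
    push_neg at h
    have : 0 < d / (c.1 - lo.1) := div_pos h (by linarith)
    rw [e1] at hmin1; linarith
  have hd2 : 0 ≤ d := by
    by_contra h
    push_neg at h
    have : d / (hi.1 - c.1) < 0 := div_neg_of_neg_of_pos h (by linarith)
    rw [e2] at hmin2; linarith
  have : d = 0 := le_antisymm hd1 hd2
  rw [e1, this]; simp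

/-- Given a finite set `L` of at least two pairwise non-parallel non-vertical
lines, there are two lines of `L` that are adjacent in the ordering of `L` by
slope whose intersection point has the smallest x-coordinate among all
pairwise intersection points of lines of `L`. -/
theorem leftmost_intersection_of_slope_adjacent_lines
    (L : Finset (ℝ × ℝ)) (hcard : 2 ≤ L.card)
    (hslopes : ∀ l ∈ L, ∀ l' ∈ L, l ≠ l' → l.1 ≠ l'.1) :
    ∃ l ∈ L, ∃ l' ∈ L, l ≠ l' ∧
      (∀ l'' ∈ L, ¬(min l.1 l'.1 < l''.1 ∧ l''.1 < max l.1 l'.1)) ∧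
      ∀ a ∈ L, ∀ b ∈ L, a ≠ b → interX l l' ≤ interX a b := by
  classical
  obtain ⟨a0, ha0, b0, hb0, hab0⟩ := Finset.one_lt_card.mp hcard
  set P : Finset ((ℝ × ℝ) × (ℝ × ℝ)) := (L ×ˢ L).filter (fun p => p.1 ≠ p.2) with hP
  have hmemP : ∀ a ∈ L, ∀ b ∈ L, a ≠ b → (a, b) ∈ P := by
    intro a ha b hb hab
    simp [hP, Finset.mem_filter, Finset.mem_product, ha, hb, hab]
  have hPne : P.Nonempty := ⟨(a0, b0), hmemP a0 ha0 b0 hb0 hab0⟩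
  set m := P.inf' hPne (fun p => interX p.1 p.2) with hm
  have hlow : ∀ a ∈ L, ∀ b ∈ L, a ≠ b → m ≤ interX a b := by
    intro a ha b hb hab
    exact Finset.inf'_le _ (hmemP a ha b hb hab)
  obtain ⟨p0, hp0, hp0m⟩ := Finset.exists_mem_eq_inf' hPne (fun p => interX p.1 p.2)
  set Q : Finset ((ℝ × ℝ) × (ℝ × ℝ)) := P.filter (fun p => interX p.1 p.2 = m) with hQ
  have hQne : Q.Nonempty := ⟨p0, by simp [hQ, Finset.mem_filter, hp0, hp0m.symm, hm]⟩
  obtain ⟨p, hpQ, hpmin⟩ := Q.exists_min_image (fun p => |p.1.1 - p.2.1|) hQne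
  rw [hQ, Finset.mem_filter] at hpQ
  obtain ⟨hpP, hpm⟩ := hpQ
  rw [hP, Finset.mem_filter, Finset.mem_product] at hpP
  obtain ⟨⟨h1L, h2L⟩, hne⟩ := hpP
  have hsl : p.1.1 ≠ p.2.1 := hslopes p.1 h1L p.2 h2L hne
  refine ⟨p.1, h1L, p.2, h2L, hne, ?_, ?_⟩
  · intro c hc ⟨hb1, hb2⟩
    rcases hsl.lt_or_gt with h | h
    · rw [min_eq_left h.le] at hb1
      rw [max_eq_right h.le] at hb2
      have hkey : interX p.1 c = m :=
        between_eq p.1 p.2 c m hpm hb1 hb2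
          (hlow p.1 h1L c hc (fun e => by have := congrArg Prod.fst e; linarith))
          (hlow c hc p.2 h2L (fun e => by have := congrArg Prod.fst e; linarith))
      have hQmem : (p.1, c) ∈ Q := by
        rw [hQ, Finset.mem_filter]
        exact ⟨hmemP p.1 h1L c hc (fun e => by have := congrArg Prod.fst e; linarith), hkey⟩
      have := hpmin _ hQmem
      simp only at this
      rw [abs_of_neg (by linarith : p.1.1 - p.2.1 < 0),
        abs_of_neg (by linarith : p.1.1 - c.1 < 0)] at this
      linarith
    · rw [min_eq_right h.le] at hb1
      rw [max_eq_left h.le] at hb2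
      have hpm' : interX p.2 p.1 = m := by rw [interX_comm]; exact hpm
      have hkey : interX p.2 c = m :=
        between_eq p.2 p.1 c m hpm' hb1 hb2
          (hlow p.2 h2L c hc (fun e => by have := congrArg Prod.fst e; linarith))
          (hlow c hc p.1 h1L (fun e => by have := congrArg Prod.fst e; linarith))
      have hQmem : (p.2, c) ∈ Q := by
        rw [hQ, Finset.mem_filter]
        exact ⟨hmemP p.2 h2L c hc (fun e => by have := congrArg Prod.fst e; linarith), hkey⟩
      have := hpmin _ hQmem
      simp only at this
      rw [abs_of_pos (by linarith : (0:ℝ) < p.1.1 - p.2.1),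
        abs_of_neg (by linarith : p.2.1 - c.1 < 0)] at this
      linarith
  · intro a ha b hb hab
    rw [hpm]
    exact hlow a ha b hb hab
end

section
/- There is an absolute constant κ > 0 with the following property. For every integer n ≥ 2, every real c ≥ 1, every real δ with 0 < δ ≤ 1, and all natural numbers m_p ≥ 1 and m'_p with m_p ≤ m'_p ≤ 2·m_p, δ·n ≤ m'_p and m'_p ≤ 4n², the following holds. Let B be a binomial random variable with N = ⌈4·c·n·ln n⌉ trials and success probability m'_p/(4n²), and let M = (n/(c·ln n))·B. Then Pr[m_p − δ·n ≤ M ≤ 2·m_p + δ·n] ≥ 1 − 2·n^{−κ·δ²·c·n/m_p}. -/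
open Finset

/-- The probability that a binomial random variable with `N` trials and
success probability `t` takes the value `k`. -/
noncomputable def binomPMF (N : ℕ) (t : ℝ) (k : ℕ) : ℝ :=
  (N.choose k : ℝ) * t ^ k * (1 - t) ^ (N - k)

private lemma binomPMF_nonneg {N : ℕ} {t : ℝ} (ht0 : 0 ≤ t) (ht1 : t ≤ 1) (k : ℕ) :
    0 ≤ binomPMF N t k := by
  unfold binomPMF
  have h1 : (0:ℝ) ≤ 1 - t := by linarith
  positivity

private lemma sum_binom (a b : ℝ) (N : ℕ) :
    ∑ k ∈ Finset.range (N + 1), (N.choose k : ℝ) * a ^ k * b ^ (N - k) = (a + b) ^ N := by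
  rw [add_pow]
  refine Finset.sum_congr rfl fun k _ => ?_
  ring

private lemma exp_le_quad {x : ℝ} (hx : |x| ≤ 1) :
    Real.exp x ≤ 1 + x + (3/4) * x ^ 2 := by
  have h := Real.exp_bound hx (by norm_num : 0 < 2)
  have hsum : ∑ m ∈ Finset.range 2, x ^ m / (m.factorial : ℝ) = 1 + x := by
    simp [Finset.sum_range_succ]
  rw [hsum] at h
  have h1 := (abs_sub_le_iff.1 h).1
  have h2 : |x| ^ 2 = x ^ 2 := sq_abs x
  norm_num [h2] at h1
  nlinarith

private lemma chernoff_upper (N : ℕ) (t x lam : ℝ) (ht0 : 0 ≤ t) (ht1 : t ≤ 1)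
    (hl0 : 0 ≤ lam) (hl1 : lam ≤ 1) :
    ∑ k ∈ Finset.range (N + 1), (if x < (k : ℝ) then binomPMF N t k else 0)
      ≤ Real.exp (-(lam * x) + N * t * (lam + (3/4) * lam ^ 2)) := by
  have hpmf := fun k => binomPMF_nonneg (N := N) ht0 ht1 k
  have step1 : ∑ k ∈ Finset.range (N + 1), (if x < (k : ℝ) then binomPMF N t k else 0)
      ≤ ∑ k ∈ Finset.range (N + 1), Real.exp (lam * ((k : ℝ) - x)) * binomPMF N t k := by
    refine Finset.sum_le_sum fun k _ => ?_
    split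
    · next h =>
      have : (1:ℝ) ≤ Real.exp (lam * ((k : ℝ) - x)) :=
        Real.one_le_exp (by nlinarith)
      nlinarith [hpmf k]
    · exact mul_nonneg (Real.exp_pos _).le (hpmf k)
  have step2 : ∑ k ∈ Finset.range (N + 1), Real.exp (lam * ((k : ℝ) - x)) * binomPMF N t k
      = Real.exp (-(lam * x)) * (t * Real.exp lam + (1 - t)) ^ N := by
    rw [← sum_binom (t * Real.exp lam) (1 - t) N, Finset.mul_sum]
    refine Finset.sum_congr rfl fun k _ => ?_
    rw [binomPMF, mul_pow, show lam * ((k : ℝ) - x) = -(lam * x) + (k : ℕ) * lam by push_cast; ring,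
      Real.exp_add, Real.exp_nat_mul]
    ring
  have hbase0 : (0:ℝ) ≤ t * Real.exp lam + (1 - t) := by
    have := (Real.exp_pos lam).le
    nlinarith
  have step3 : (t * Real.exp lam + (1 - t)) ^ N ≤ Real.exp (N * (t * (Real.exp lam - 1))) := by
    rw [Real.exp_nat_mul]
    refine pow_le_pow_left₀ hbase0 ?_ N
    have := Real.add_one_le_exp (t * (Real.exp lam - 1))
    linarith
  have step4 : (N:ℝ) * (t * (Real.exp lam - 1)) ≤ N * t * (lam + (3/4) * lam ^ 2) := by
    have hq : Real.exp lam - 1 ≤ lam + (3/4) * lam ^ 2 := by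
      have := exp_le_quad (x := lam) (by rw [abs_of_nonneg hl0]; exact hl1)
      linarith
    have hNt : (0:ℝ) ≤ (N:ℝ) * t := by positivity
    nlinarith
  calc ∑ k ∈ Finset.range (N + 1), (if x < (k : ℝ) then binomPMF N t k else 0)
      ≤ Real.exp (-(lam * x)) * (t * Real.exp lam + (1 - t)) ^ N := step1.trans (le_of_eq step2)
    _ ≤ Real.exp (-(lam * x)) * Real.exp (N * (t * (Real.exp lam - 1))) := by
        exact mul_le_mul_of_nonneg_left step3 (Real.exp_pos _).le
    _ ≤ Real.exp (-(lam * x)) * Real.exp (N * t * (lam + (3/4) * lam ^ 2)) := by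
        exact mul_le_mul_of_nonneg_left (Real.exp_le_exp.2 step4) (Real.exp_pos _).le
    _ = Real.exp (-(lam * x) + N * t * (lam + (3/4) * lam ^ 2)) := (Real.exp_add _ _).symm

private lemma chernoff_lower (N : ℕ) (t x lam : ℝ) (ht0 : 0 ≤ t) (ht1 : t ≤ 1)
    (hl0 : 0 ≤ lam) (hl1 : lam ≤ 1) :
    ∑ k ∈ Finset.range (N + 1), (if (k : ℝ) < x then binomPMF N t k else 0)
      ≤ Real.exp (lam * x + N * t * (-lam + (3/4) * lam ^ 2)) := by
  have hpmf := fun k => binomPMF_nonneg (N := N) ht0 ht1 k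
  have step1 : ∑ k ∈ Finset.range (N + 1), (if (k : ℝ) < x then binomPMF N t k else 0)
      ≤ ∑ k ∈ Finset.range (N + 1), Real.exp (lam * (x - (k : ℝ))) * binomPMF N t k := by
    refine Finset.sum_le_sum fun k _ => ?_
    split
    · next h =>
      have : (1:ℝ) ≤ Real.exp (lam * (x - (k : ℝ))) :=
        Real.one_le_exp (by nlinarith)
      nlinarith [hpmf k]
    · exact mul_nonneg (Real.exp_pos _).le (hpmf k)
  have step2 : ∑ k ∈ Finset.range (N + 1), Real.exp (lam * (x - (k : ℝ))) * binomPMF N t k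
      = Real.exp (lam * x) * (t * Real.exp (-lam) + (1 - t)) ^ N := by
    rw [← sum_binom (t * Real.exp (-lam)) (1 - t) N, Finset.mul_sum]
    refine Finset.sum_congr rfl fun k _ => ?_
    rw [binomPMF, mul_pow, show lam * (x - (k : ℝ)) = lam * x + (k : ℕ) * (-lam) by push_cast; ring,
      Real.exp_add, Real.exp_nat_mul]
    ring
  have hbase0 : (0:ℝ) ≤ t * Real.exp (-lam) + (1 - t) := by
    have := (Real.exp_pos (-lam)).le
    nlinarith
  have step3 : (t * Real.exp (-lam) + (1 - t)) ^ N
      ≤ Real.exp (N * (t * (Real.exp (-lam) - 1))) := by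
    rw [Real.exp_nat_mul]
    refine pow_le_pow_left₀ hbase0 ?_ N
    have := Real.add_one_le_exp (t * (Real.exp (-lam) - 1))
    linarith
  have step4 : (N:ℝ) * (t * (Real.exp (-lam) - 1)) ≤ N * t * (-lam + (3/4) * lam ^ 2) := by
    have hq : Real.exp (-lam) - 1 ≤ -lam + (3/4) * lam ^ 2 := by
      have := exp_le_quad (x := -lam) (by rw [abs_neg, abs_of_nonneg hl0]; exact hl1)
      nlinarith
    have hNt : (0:ℝ) ≤ (N:ℝ) * t := by positivity
    nlinarith
  calc ∑ k ∈ Finset.range (N + 1), (if (k : ℝ) < x then binomPMF N t k else 0)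
      ≤ Real.exp (lam * x) * (t * Real.exp (-lam) + (1 - t)) ^ N := step1.trans (le_of_eq step2)
    _ ≤ Real.exp (lam * x) * Real.exp (N * (t * (Real.exp (-lam) - 1))) := by
        exact mul_le_mul_of_nonneg_left step3 (Real.exp_pos _).le
    _ ≤ Real.exp (lam * x) * Real.exp (N * t * (-lam + (3/4) * lam ^ 2)) := by
        exact mul_le_mul_of_nonneg_left (Real.exp_le_exp.2 step4) (Real.exp_pos _).le
    _ = Real.exp (lam * x + N * t * (-lam + (3/4) * lam ^ 2)) := (Real.exp_add _ _).symm

private lemma div_mul_lt_iff' {nn cl y : ℝ} (hn : 0 < nn) (hcl : 0 < cl) (k : ℝ) :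
    nn / cl * k < y ↔ k < y * cl / nn := by
  rw [div_mul_eq_mul_div, div_lt_iff₀ hcl, lt_div_iff₀ hn]
  constructor <;> intro h <;> nlinarith

private lemma lt_div_mul_iff' {nn cl y : ℝ} (hn : 0 < nn) (hcl : 0 < cl) (k : ℝ) :
    y < nn / cl * k ↔ y * cl / nn < k := by
  rw [div_mul_eq_mul_div, lt_div_iff₀ hcl, div_lt_iff₀ hn]
  constructor <;> intro h <;> nlinarith

set_option maxHeartbeats 2000000 in
/-- There is an absolute constant `κ > 0` such that for every `n ≥ 2`,
`c ≥ 1`, `0 < δ ≤ 1` and naturals `m_p ≥ 1`, `m'_p` with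
`m_p ≤ m'_p ≤ 2 * m_p`, `δ * n ≤ m'_p` and `m'_p ≤ 4 * n ^ 2`, if `B` is a
binomial random variable with `N = ⌈4 * c * n * ln n⌉` trials and success
probability `m'_p / (4 * n ^ 2)` and `M = (n / (c * ln n)) * B`, then
`Pr[m_p - δ * n ≤ M ≤ 2 * m_p + δ * n] ≥ 1 - 2 * n ^ (-κ * δ² * c * n / m_p)`. -/
theorem binomial_estimator_two_approx_absolute :
    ∃ κ : ℝ, 0 < κ ∧
      ∀ n : ℕ, 2 ≤ n →
      ∀ c : ℝ, 1 ≤ c →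
      ∀ δ : ℝ, 0 < δ → δ ≤ 1 →
      ∀ mp mp' : ℕ, 1 ≤ mp → mp ≤ mp' → mp' ≤ 2 * mp →
        δ * n ≤ mp' → mp' ≤ 4 * n ^ 2 →
        1 - 2 * (n : ℝ) ^ (-(κ * δ ^ 2 * c * n / mp)) ≤
          ∑ k ∈ Finset.range (⌈4 * c * n * Real.log n⌉₊ + 1),
            if (mp : ℝ) - δ * n ≤ ((n : ℝ) / (c * Real.log n)) * k ∧
                ((n : ℝ) / (c * Real.log n)) * k ≤ 2 * mp + δ * n then
              binomPMF ⌈4 * c * n * Real.log n⌉₊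
                ((mp' : ℝ) / (4 * (n : ℝ) ^ 2)) k
            else 0 := by
  refine ⟨5/192, by norm_num, ?_⟩
  intro n hn c hc δ hδ0 hδ1 mp mp' hmp1 hle hle2 hδn hub
  set N : ℕ := ⌈4 * c * n * Real.log n⌉₊ with hNdef
  set L : ℝ := Real.log n with hLdef
  set t : ℝ := (mp' : ℝ) / (4 * (n : ℝ) ^ 2) with htdef
  have hn2 : (2:ℝ) ≤ (n:ℝ) := by exact_mod_cast hn
  have hnpos : (0:ℝ) < n := by linarith
  have hL2 : Real.log 2 ≤ L := Real.log_le_log (by norm_num) hn2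
  have hlog2 : (0.6931471803 : ℝ) < Real.log 2 := Real.log_two_gt_d9
  have hLpos : (0:ℝ) < L := by linarith
  have hcL : (0:ℝ) < c * L := by positivity
  have hmp1R : (1:ℝ) ≤ (mp:ℝ) := by exact_mod_cast hmp1
  have hmpR : (mp:ℝ) ≤ (mp':ℝ) := by exact_mod_cast hle
  have hmp2R : (mp':ℝ) ≤ 2 * mp := by exact_mod_cast hle2
  have hubR : (mp':ℝ) ≤ 4 * (n:ℝ) ^ 2 := by exact_mod_cast hub
  have ht0 : 0 ≤ t := by positivity
  have ht1 : t ≤ 1 := by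
    rw [htdef, div_le_one (by positivity)]; exact hubR
  have hmp'pos : (0:ℝ) < mp' := by linarith
  -- N bounds
  have hNlb : 4 * c * (n:ℝ) * L ≤ (N:ℝ) := Nat.le_ceil _
  have hNub : (N:ℝ) ≤ 4 * c * (n:ℝ) * L + 1 := by
    have := Nat.ceil_lt_add_one (by positivity : (0:ℝ) ≤ 4 * c * (n:ℝ) * L)
    linarith
  set μ : ℝ := (N:ℝ) * t with hμdef
  have hμlb : c * L * mp' / n ≤ μ := by
    have h2 : c * L * mp' / n = 4 * c * (n:ℝ) * L * t := by
      rw [htdef]; field_simp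
    rw [hμdef, h2]
    exact mul_le_mul_of_nonneg_right hNlb ht0
  have hμub : μ ≤ c * L * mp' / n + 1 := by
    rw [hμdef]
    have h1 : (N:ℝ) * t ≤ (4 * c * (n:ℝ) * L + 1) * t :=
      mul_le_mul_of_nonneg_right hNub ht0
    have h2 : (4 * c * (n:ℝ) * L + 1) * t ≤ c * L * mp' / n + 1 := by
      have h3 : 4 * c * (n:ℝ) * L * t = c * L * mp' / n := by
        rw [htdef]; field_simp
      linarith [ht1, h3]
    linarith
  set a : ℝ := δ * (c * L) with hadef
  have ha0 : 0 < a := by positivity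
  have haμ' : a ≤ c * L * mp' / n := by
    rw [hadef, le_div_iff₀ hnpos]
    linarith [mul_le_mul_of_nonneg_left hδn hcL.le]
  have haμ : a ≤ μ := haμ'.trans hμlb
  have hμpos : 0 < μ := lt_of_lt_of_le ha0 haμ
  -- total probability is 1
  have hsum1 : ∑ k ∈ Finset.range (N + 1), binomPMF N t k = 1 := by
    have h := sum_binom t (1 - t) N
    simp only [binomPMF]
    rw [h]
    norm_num
  have hpmf := fun k => binomPMF_nonneg (N := N) ht0 ht1 k
  set s : ℝ := (n:ℝ) / (c * L) with hsdef
  have hspos : 0 < s := by positivity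
  set P : ℝ := ∑ k ∈ Finset.range (N + 1),
      (if (mp : ℝ) - δ * n ≤ s * k ∧ s * k ≤ 2 * mp + δ * n then binomPMF N t k else 0)
    with hPdef
  set E : ℝ := 5/192 * δ ^ 2 * c * n / mp with hEdef
  have hEpos : 0 < E := by
    rw [hEdef]; positivity
  have hrpow : (n:ℝ) ^ (-E) = Real.exp (-(E * L)) := by
    rw [Real.rpow_def_of_pos hnpos]
    ring_nf
    rw [hLdef, mul_comm]
  have hδnmp : δ * n ≤ 2 * mp := by
    calc δ * (n:ℝ) ≤ mp' := hδn
      _ ≤ 2 * mp := hmp2R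
  show 1 - 2 * (n:ℝ) ^ (-E) ≤ P
  by_cases hcase : a < 2
  · -- trivial case: RHS ≤ 0 ≤ P
    have hP0 : 0 ≤ P := by
      rw [hPdef]
      refine Finset.sum_nonneg fun k _ => ?_
      split
      · exact hpmf k
      · exact le_refl 0
    have hEL : E * L ≤ Real.log 2 := by
      have h1 : E * L = 5/192 * (δ * n / mp) * a := by
        rw [hEdef, hadef]; field_simp
      have h2 : δ * n / mp ≤ 2 := by
        rw [div_le_iff₀ (by linarith : (0:ℝ) < mp)]; linarith
      have h3 : 5/192 * (δ * n / mp) * a ≤ 5/192 * 2 * 2 := by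
        have hd : 0 ≤ δ * n / mp := by positivity
        have hm : (δ * n / mp) * a ≤ 2 * 2 :=
          mul_le_mul h2 hcase.le ha0.le (by norm_num)
        linarith [hm]
      rw [h1]
      linarith [hlog2]
    have : (1:ℝ)/2 ≤ Real.exp (-(E * L)) := by
      rw [show (1:ℝ)/2 = Real.exp (-(Real.log 2)) by
        rw [Real.exp_neg, Real.exp_log (by norm_num : (0:ℝ) < 2)]; norm_num]
      exact Real.exp_le_exp.2 (by linarith)
    rw [hrpow]
    linarith
  · push_neg at hcase
    -- main case: a ≥ 2
    have hμub2 : μ ≤ 3 * (c * L * mp / n) := by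
      have h1 : 2 ≤ c * L * mp' / n := le_trans hcase haμ'
      have h2 : c * L * mp' / n ≤ 2 * (c * L * mp / n) := by
        have he : 2 * (c * L * (mp:ℝ) / n) = (2 * (c * L * mp)) / n := by ring
        rw [he, div_le_div_iff_of_pos_right hnpos]
        linarith [mul_le_mul_of_nonneg_left hmp2R hcL.le]
      linarith [hμub, h1, h2]
    set d : ℝ := a / 2 with hddef
    have hd1 : 1 ≤ d := by rw [hddef]; linarith
    set lam : ℝ := d / (2 * μ) with hlamdef
    have hlam0 : 0 ≤ lam := by positivity
    have hlam1 : lam ≤ 1 := by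
      rw [hlamdef, div_le_one (by positivity)]
      rw [hddef]; linarith
    set xlo : ℝ := ((mp:ℝ) - δ * n) * (c * L) / n with hxlodef
    set xhi : ℝ := (2 * (mp:ℝ) + δ * n) * (c * L) / n with hxhidef
    have hmpcL : (mp:ℝ) * (c * L) / n ≤ μ := by
      refine le_trans ?_ hμlb
      rw [show c * L * (mp':ℝ) / n = (mp':ℝ) * (c * L) / n by ring,
        div_le_div_iff_of_pos_right hnpos]
      linarith [mul_le_mul_of_nonneg_right hmpR hcL.le]
    have hxlo : xlo ≤ μ - d := by
      have h1 : xlo = (mp:ℝ) * (c * L) / n - a := by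
        rw [hxlodef, hadef]; field_simp
      rw [h1, hddef]
      linarith [hmpcL]
    have hxhi : μ + d ≤ xhi := by
      have h1 : xhi = 2 * (mp:ℝ) * (c * L) / n + a := by
        rw [hxhidef, hadef]; field_simp
      have h2 : (mp':ℝ) * (c * L) / n ≤ 2 * (mp:ℝ) * (c * L) / n := by
        rw [div_le_div_iff_of_pos_right hnpos]
        linarith [mul_le_mul_of_nonneg_right hmp2R hcL.le]
      have h3 : c * L * mp' / n = (mp':ℝ) * (c * L) / n := by ring_nf
      rw [h1, hddef]
      have := hμub
      rw [h3] at this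
      linarith
    -- complement
    set Q : ℝ := ∑ k ∈ Finset.range (N + 1),
        (if ¬((mp : ℝ) - δ * n ≤ s * k ∧ s * k ≤ 2 * mp + δ * n) then binomPMF N t k else 0)
      with hQdef
    have hPQ : P + Q = 1 := by
      rw [hPdef, hQdef, ← Finset.sum_add_distrib, ← hsum1]
      refine Finset.sum_congr rfl fun k _ => ?_
      by_cases h : (mp : ℝ) - δ * n ≤ s * k ∧ s * k ≤ 2 * mp + δ * n
      · rw [if_pos h, if_neg (not_not_intro h), add_zero]
      · rw [if_neg h, if_pos h, zero_add]
    -- conversion of conditions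
    have hconv_lo : ∀ k : ℕ, s * k < (mp:ℝ) - δ * n ↔ (k:ℝ) < xlo :=
      fun k => div_mul_lt_iff' hnpos hcL (k:ℝ)
    have hconv_hi : ∀ k : ℕ, 2 * (mp:ℝ) + δ * n < s * k ↔ xhi < (k:ℝ) :=
      fun k => lt_div_mul_iff' hnpos hcL (k:ℝ)
    have hxlohi : xlo < xhi := by
      have : (0:ℝ) < d := by linarith
      linarith [hxlo, hxhi]
    have hQsplit : Q ≤
        (∑ k ∈ Finset.range (N + 1), (if (k:ℝ) < xlo then binomPMF N t k else 0)) +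
        (∑ k ∈ Finset.range (N + 1), (if xhi < (k:ℝ) then binomPMF N t k else 0)) := by
      rw [hQdef, ← Finset.sum_add_distrib]
      refine Finset.sum_le_sum fun k _ => ?_
      by_cases h : (mp : ℝ) - δ * n ≤ s * k ∧ s * k ≤ 2 * mp + δ * n
      · rw [if_neg (not_not_intro h)]
        have h0 := hpmf k
        have e1 : (0:ℝ) ≤ if (k:ℝ) < xlo then binomPMF N t k else 0 := by
          split
          · exact h0
          · exact le_refl 0
        have e2 : (0:ℝ) ≤ if xhi < (k:ℝ) then binomPMF N t k else 0 := by
          split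
          · exact h0
          · exact le_refl 0
        linarith
      · rw [if_pos h]
        rw [not_and_or, not_le, not_le] at h
        rcases h with h | h
        · rw [hconv_lo k] at h
          have hk2 : ¬(xhi < (k:ℝ)) := by intro hk; linarith
          rw [if_pos h, if_neg hk2]
          linarith [hpmf k]
        · rw [hconv_hi k] at h
          have hk2 : ¬((k:ℝ) < xlo) := by intro hk; linarith
          rw [if_pos h, if_neg hk2]
          linarith [hpmf k]
    -- Chernoff bounds
    have hlo := chernoff_lower N t xlo lam ht0 ht1 hlam0 hlam1
    have hhi := chernoff_upper N t xhi lam ht0 ht1 hlam0 hlam1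
    have hexp_target : -(5/16) * d ^ 2 / μ ≤ -(E * L) := by
      -- 5 d² / (16 μ) ≥ E L, using μ ≤ 3 c L mp / n, d = a/2, a = δ c L
      have hELn : E * L * μ ≤ E * L * (3 * (c * L * mp / n)) := by
        have : 0 ≤ E * L := by positivity
        exact mul_le_mul_of_nonneg_left hμub2 this
      have hkey : E * L * (3 * (c * L * mp / n)) = 5/16 * d ^ 2 := by
        rw [hEdef, hddef, hadef]
        field_simp
        ring
      rw [div_le_iff₀ hμpos]
      linarith [hELn, hkey]
    have hlo2 : lam * xlo + (N:ℝ) * t * (-lam + (3/4) * lam ^ 2) ≤ -(E * L) := by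
      have h1 : lam * xlo ≤ lam * (μ - d) := by
        apply mul_le_mul_of_nonneg_left hxlo hlam0
      have h2 : (N:ℝ) * t = μ := hμdef.symm
      rw [h2]
      have h3 : lam * (μ - d) + μ * (-lam + (3/4) * lam ^ 2) = -(lam * d) + (3/4) * lam ^ 2 * μ := by
        ring
      have h4 : -(lam * d) + (3/4) * lam ^ 2 * μ = -(5/16) * d ^ 2 / μ := by
        rw [hlamdef]
        field_simp
        ring
      linarith [h1, h3, h4, hexp_target]
    have hhi2 : -(lam * xhi) + (N:ℝ) * t * (lam + (3/4) * lam ^ 2) ≤ -(E * L) := by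
      have h1 : lam * (μ + d) ≤ lam * xhi := mul_le_mul_of_nonneg_left hxhi hlam0
      have h2 : (N:ℝ) * t = μ := hμdef.symm
      rw [h2]
      have h3 : -(lam * (μ + d)) + μ * (lam + (3/4) * lam ^ 2)
          = -(lam * d) + (3/4) * lam ^ 2 * μ := by ring
      have h4 : -(lam * d) + (3/4) * lam ^ 2 * μ = -(5/16) * d ^ 2 / μ := by
        rw [hlamdef]
        field_simp
        ring
      linarith [h1, h3, h4, hexp_target]
    have hQbound : Q ≤ 2 * Real.exp (-(E * L)) := by
      calc Q ≤ _ := hQsplit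
        _ ≤ Real.exp (lam * xlo + (N:ℝ) * t * (-lam + (3/4) * lam ^ 2))
            + Real.exp (-(lam * xhi) + (N:ℝ) * t * (lam + (3/4) * lam ^ 2)) := by
            exact add_le_add hlo hhi
        _ ≤ Real.exp (-(E * L)) + Real.exp (-(E * L)) :=
            add_le_add (Real.exp_le_exp.2 hlo2) (Real.exp_le_exp.2 hhi2)
        _ = 2 * Real.exp (-(E * L)) := by ring
    rw [hrpow]
    linarith
end
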